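/- Let A be a ring and B a commutative ring. Let f : A → B be a central ℤ-linear map, let n ≥ 1, and let a_1, …, a_n ∈ A. Then Σ_{σ ∈ S_n, σ(n) = n} sgn(σ) · Π_c f(a_{i_1} a_{i_2} ⋯ a_{i_k}) = f(a_n) · f_{n-1}(a_1, a_2, …, a_{n-1}), where the sum ranges over all permutations σ of [n] fixing n, and the product runs over all cycles c = (i_1, i_2, …, i_k) of σ. -/

import Mathlib

open scoped Classical

noncomputable section

/-- A `ℤ`-linear map `f : A → B` is *central* if `f (a * a') = f (a' * a)` for all `a, a'`. -/
def Central {A B : Type*} [Ring A] [CommRing B] (f : A →ₗ[ℤ] B) : Prop :=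
  ∀ a a' : A, f (a * a') = f (a' * a)

/-- The product `a x * a (σ x) * a (σ² x) * ⋯` along the cycle of the permutation `σ`
containing `x`, starting at `x` (the cycle has length `Function.minimalPeriod σ x`). -/
def cycleProdAt {ι A : Type*} [Ring A] (a : ι → A) (σ : Equiv.Perm ι) (x : ι) : A :=
  ((List.range (Function.minimalPeriod (⇑σ) x)).map (fun j => a ((σ ^ j) x))).prod

/-- The Frobenius map of a central `ℤ`-linear map `f : A → B`, applied to a finite family
`a : ι → A`:  `∑_{σ} sgn σ • ∏_{cycles c of σ} f (a_{i₁} a_{i₂} ⋯ a_{i_k})`, where each cycle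
is represented by the product along it starting from its distinguished element (the one
minimizing a fixed enumeration of `ι`); when `f` is central this agrees with the classical
definition, which is independent of the starting points. -/
def frob {ι A B : Type*} [Fintype ι] [DecidableEq ι] [Ring A] [CommRing B]
    (f : A →ₗ[ℤ] B) (a : ι → A) : B :=
  ∑ σ : Equiv.Perm ι, (Equiv.Perm.sign σ : ℤ) •
    ∏ x : ι,
      if ∀ j : ℕ, (Fintype.equivFin ι) x ≤ (Fintype.equivFin ι) ((σ ^ j) x)
      then f (cycleProdAt a σ x) else 1

/-- `f` is an `n`-homomorphism if it is central and its `(n+1)`-Frobenius map vanishes. -/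
def IsNHom {A B : Type*} [Ring A] [CommRing B] (n : ℕ) (f : A →ₗ[ℤ] B) : Prop :=
  Central f ∧ ∀ a : Fin (n + 1) → A, frob f a = 0

/-- `π` is a set partition of the finite set `J`: its blocks are nonempty, pairwise
disjoint, and their union is `J`. -/
def IsSetPartition {α : Type*} [DecidableEq α] (J : Finset α) (π : Finset (Finset α)) : Prop :=
  (∀ P ∈ π, P.Nonempty) ∧
  (∀ P ∈ π, ∀ Q ∈ π, P ≠ Q → Disjoint P Q) ∧
  π.biUnion id = J

/-- Delete the element `n` from the block of `π` containing it (removing the block if it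
becomes empty). -/
def delPart (n : ℕ) (π : Finset (Finset ℕ)) : Finset (Finset ℕ) :=
  (π.image (fun P => P.erase n)).erase ∅

namespace Stmt8Aux

variable {ι A B : Type*} [Fintype ι] [DecidableEq ι] [Ring A] [CommRing B]

lemma perm_mem_periodicPts (σ : Equiv.Perm ι) (x : ι) : x ∈ Function.periodicPts ⇑σ :=
  ⟨orderOf σ, orderOf_pos σ, by
    rw [Function.IsPeriodicPt, Function.IsFixedPt, ← Equiv.Perm.coe_pow, pow_orderOf_eq_one]
    rfl⟩

lemma f_cycleProdAt_apply (f : A →ₗ[ℤ] B) (hf : Central f) (a : ι → A)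
    (σ : Equiv.Perm ι) (x : ι) :
    f (cycleProdAt a σ (σ x)) = f (cycleProdAt a σ x) := by
  have hpos : 0 < Function.minimalPeriod ⇑σ x :=
    Function.minimalPeriod_pos_of_mem_periodicPts (perm_mem_periodicPts σ x)
  obtain ⟨m, hm⟩ : ∃ m, Function.minimalPeriod ⇑σ x = m + 1 :=
    ⟨Function.minimalPeriod ⇑σ x - 1, (Nat.succ_pred_eq_of_pos hpos).symm⟩
  have hper : Function.minimalPeriod ⇑σ (σ x) = m + 1 := by
    rw [Function.minimalPeriod_apply (perm_mem_periodicPts σ x), hm]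
  have hret : (σ ^ (m + 1)) x = x := by
    have := Function.isPeriodicPt_minimalPeriod ⇑σ x
    rw [hm] at this
    exact this
  have happ : ∀ j : ℕ, (σ ^ j) (σ x) = (σ ^ (j + 1)) x := by
    intro j; rw [pow_succ]; rfl
  rw [cycleProdAt, cycleProdAt, hper, hm]
  conv_rhs => rw [List.range_succ_eq_map]
  rw [List.range_succ]
  simp only [List.map_append, List.map_map, List.map_cons, List.prod_append, List.prod_cons]
  have h1 : ((List.range m).map fun j => a ((σ ^ j) (σ x)))
      = (List.range m).map ((fun j => a ((σ ^ j) x)) ∘ Nat.succ) := by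
    apply List.map_congr_left
    intro j _; simp [happ j, Nat.succ_eq_add_one]
  rw [h1]
  simp only [List.map_singleton, List.prod_singleton, happ m, hret, pow_zero,
    Equiv.Perm.coe_one, id_eq]
  rw [hf]
  simp [Equiv.Perm.one_apply]

lemma f_cycleProdAt_pow_apply (f : A →ₗ[ℤ] B) (hf : Central f) (a : ι → A)
    (σ : Equiv.Perm ι) (x : ι) (k : ℕ) :
    f (cycleProdAt a σ ((σ ^ k) x)) = f (cycleProdAt a σ x) := by
  induction k with
  | zero => simp
  | succ k ih =>
    have : (σ ^ (k + 1)) x = σ ((σ ^ k) x) := by rw [pow_succ']; rfl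
    rw [this, f_cycleProdAt_apply f hf a σ, ih]

lemma f_cycleProdAt_sameCycle (f : A →ₗ[ℤ] B) (hf : Central f) (a : ι → A)
    (σ : Equiv.Perm ι) {x y : ι} (h : σ.SameCycle x y) :
    f (cycleProdAt a σ y) = f (cycleProdAt a σ x) := by
  obtain ⟨i, _, rfl⟩ := h.exists_pow_eq'
  exact f_cycleProdAt_pow_apply f hf a σ x i

lemma selector_exists_unique {κ : Type*} [LinearOrder κ] (g : ι → κ)
    (hg : Function.Injective g) (σ : Equiv.Perm ι) (x0 : ι) :
    ∃! x, σ.SameCycle x0 x ∧ ∀ j : ℕ, g x ≤ g ((σ ^ j) x) := by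
  have hne : (Finset.univ.filter (fun y => σ.SameCycle x0 y)).Nonempty :=
    ⟨x0, by simp [Equiv.Perm.SameCycle.refl]⟩
  obtain ⟨x, hx, hmin⟩ := Finset.exists_min_image _ g hne
  have hxc : σ.SameCycle x0 x := (Finset.mem_filter.mp hx).2
  refine ⟨x, ⟨hxc, fun j => hmin _ ?_⟩, ?_⟩
  · exact Finset.mem_filter.mpr ⟨Finset.mem_univ _,
      hxc.trans ⟨(j : ℤ), by rw [zpow_natCast]⟩⟩
  · rintro y ⟨hyc, hymin⟩
    obtain ⟨i, _, rfl⟩ := (hxc.symm.trans hyc).exists_pow_eq'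
    obtain ⟨k, _, hk⟩ := Equiv.Perm.SameCycle.exists_pow_eq'
      (⟨(-i : ℤ), by rw [zpow_neg, zpow_natCast]; exact Equiv.symm_apply_apply _ _⟩ :
        σ.SameCycle ((σ ^ i) x) x)
    have h1 : g x ≤ g ((σ ^ i) x) := hmin _ (Finset.mem_filter.mpr
      ⟨Finset.mem_univ _, hxc.trans ⟨(i : ℤ), by rw [zpow_natCast]⟩⟩)
    have h2 : g ((σ ^ i) x) ≤ g x := by
      have := hymin k
      rwa [hk] at this
    exact (hg (le_antisymm h1 h2)).symm

end Stmt8Aux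

namespace Stmt8Aux

variable {ι A B : Type*} [Fintype ι] [DecidableEq ι] [Ring A] [CommRing B]

lemma prod_ite_selector {κ : Type*} [LinearOrder κ] (g : ι → κ)
    (hg : Function.Injective g) (σ : Equiv.Perm ι) (v : ι → B)
    (hv : ∀ x y, σ.SameCycle x y → v x = v y) :
    ∏ x, (if ∀ j : ℕ, g x ≤ g ((σ ^ j) x) then v x else 1)
      = ∏ xbar ∈ Finset.univ.image (Quotient.mk (Equiv.Perm.SameCycle.setoid σ)),
          Quotient.lift v (fun x y h => hv x y h) xbar := by
  rw [Finset.prod_partition (Equiv.Perm.SameCycle.setoid σ)]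
  apply Finset.prod_congr rfl
  intro xbar hxbar
  obtain ⟨x0, -, rfl⟩ := Finset.mem_image.mp hxbar
  obtain ⟨xm, ⟨hxmc, hxmmin⟩, huniq⟩ := selector_exists_unique g hg σ x0
  rw [Finset.prod_eq_single_of_mem xm]
  · rw [if_pos hxmmin]
    exact hv xm x0 hxmc.symm
  · exact Finset.mem_filter.mpr ⟨Finset.mem_univ _, Quot.sound hxmc.symm⟩
  · intro y hy hyne
    rw [if_neg]
    intro hymin
    exact hyne (huniq y ⟨(Quotient.exact (Finset.mem_filter.mp hy).2).symm, hymin⟩)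

lemma prod_ite_selector_indep {κ κ' : Type*} [LinearOrder κ] [LinearOrder κ']
    (g : ι → κ) (hg : Function.Injective g) (g' : ι → κ') (hg' : Function.Injective g')
    (σ : Equiv.Perm ι) (v : ι → B) (hv : ∀ x y, σ.SameCycle x y → v x = v y) :
    ∏ x, (if ∀ j : ℕ, g x ≤ g ((σ ^ j) x) then v x else 1)
      = ∏ x, (if ∀ j : ℕ, g' x ≤ g' ((σ ^ j) x) then v x else 1) := by
  rw [prod_ite_selector g hg σ v hv, prod_ite_selector g' hg' σ v hv]

end Stmt8Aux

namespace Stmt8Aux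

/-- `Fin n` is equivalent to the complement of `Fin.last n` in `Fin (n+1)`. -/
def lastCompl (n : ℕ) : Fin n ≃ {x : Fin (n + 1) // x ≠ Fin.last n} where
  toFun i := ⟨i.castSucc, (Fin.castSucc_lt_last i).ne⟩
  invFun x := ⟨x.1.1,
    lt_of_le_of_ne (Nat.lt_succ_iff.mp x.1.isLt) (fun h => x.2 (Fin.ext h))⟩
  left_inv i := rfl
  right_inv x := Subtype.ext (Fin.ext rfl)

variable {n : ℕ}

lemma lastCompl_coe (i : Fin n) : ((lastCompl n i : {x : Fin (n+1) // x ≠ Fin.last n}) : Fin (n+1)) = i.castSucc := rfl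

lemma ext_last (τ : Equiv.Perm (Fin n)) :
    τ.extendDomain (lastCompl n) (Fin.last n) = Fin.last n :=
  Equiv.Perm.extendDomain_apply_not_subtype _ _ (fun h => h rfl)

lemma ext_castSucc (τ : Equiv.Perm (Fin n)) (i : Fin n) :
    τ.extendDomain (lastCompl n) i.castSucc = (τ i).castSucc := by
  have := Equiv.Perm.extendDomain_apply_image τ (lastCompl n) i
  simpa [lastCompl_coe] using this

lemma ext_pow_castSucc (τ : Equiv.Perm (Fin n)) (j : ℕ) (i : Fin n) :
    (τ.extendDomain (lastCompl n) ^ j) i.castSucc = ((τ ^ j) i).castSucc := by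
  rw [← Equiv.Perm.extendDomain_pow]
  exact ext_castSucc (τ ^ j) i

lemma ext_pow_last (τ : Equiv.Perm (Fin n)) (j : ℕ) :
    (τ.extendDomain (lastCompl n) ^ j) (Fin.last n) = Fin.last n := by
  rw [← Equiv.Perm.extendDomain_pow]
  exact ext_last (τ ^ j)

lemma ext_minimalPeriod (τ : Equiv.Perm (Fin n)) (i : Fin n) :
    Function.minimalPeriod ⇑(τ.extendDomain (lastCompl n)) i.castSucc
      = Function.minimalPeriod ⇑τ i := by
  apply le_antisymm
  · apply Function.IsPeriodicPt.minimalPeriod_le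
      (Function.minimalPeriod_pos_of_mem_periodicPts (perm_mem_periodicPts τ i))
    show _ = _
    rw [← Equiv.Perm.coe_pow, ext_pow_castSucc]
    have := Function.isPeriodicPt_minimalPeriod ⇑τ i
    rw [Function.IsPeriodicPt, Function.IsFixedPt, ← Equiv.Perm.coe_pow] at this
    rw [this]
  · apply Function.IsPeriodicPt.minimalPeriod_le
      (Function.minimalPeriod_pos_of_mem_periodicPts
        (perm_mem_periodicPts (τ.extendDomain (lastCompl n)) i.castSucc))
    show (τ ^ _) i = i
    apply Fin.castSucc_injective
    rw [← ext_pow_castSucc]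
    have := Function.isPeriodicPt_minimalPeriod ⇑(τ.extendDomain (lastCompl n)) i.castSucc
    rw [Function.IsPeriodicPt, Function.IsFixedPt, ← Equiv.Perm.coe_pow] at this
    exact this

lemma ext_cycleProdAt {A : Type*} [Ring A] (a : Fin (n + 1) → A)
    (τ : Equiv.Perm (Fin n)) (i : Fin n) :
    cycleProdAt a (τ.extendDomain (lastCompl n)) i.castSucc
      = cycleProdAt (fun i : Fin n => a i.castSucc) τ i := by
  rw [cycleProdAt, cycleProdAt, ext_minimalPeriod]
  congr 1
  apply List.map_congr_left
  intro j _
  rw [ext_pow_castSucc]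

lemma ext_cycleProdAt_last {A : Type*} [Ring A] (a : Fin (n + 1) → A)
    (τ : Equiv.Perm (Fin n)) :
    cycleProdAt a (τ.extendDomain (lastCompl n)) (Fin.last n) = a (Fin.last n) := by
  rw [cycleProdAt, Function.minimalPeriod_eq_one_iff_isFixedPt.mpr (ext_last τ)]
  simp [ext_pow_last]

end Stmt8Aux

lemma Stmt8Aux.castSucc_lastCompl_symm {n : ℕ} (y : {x : Fin (n + 1) // x ≠ Fin.last n}) :
    ((Stmt8Aux.lastCompl n).symm y).castSucc = y.1 := Fin.ext rfl


/-- The part of the defining sum of `f_n` coming from permutations fixing the last index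
equals `f(aₙ) · f_{n-1}(a₁,…,a_{n-1})` (here with `n + 1` playing the role of `n ≥ 1`). -/
theorem stmt8 {A B : Type*} [Ring A] [CommRing B] (f : A →ₗ[ℤ] B) (hf : Central f)
    (n : ℕ) (a : Fin (n + 1) → A) :
    (∑ σ ∈ Finset.univ.filter
        (fun σ : Equiv.Perm (Fin (n + 1)) => σ (Fin.last n) = Fin.last n),
      (Equiv.Perm.sign σ : ℤ) •
        ∏ x : Fin (n + 1),
          if ∀ j : ℕ, (Fintype.equivFin (Fin (n + 1))) x ≤
              (Fintype.equivFin (Fin (n + 1))) ((σ ^ j) x)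
          then f (cycleProdAt a σ x) else 1)
      = f (a (Fin.last n)) * frob f (fun i : Fin n => a i.castSucc) := by
  classical
  set a' : Fin n → A := fun i => a i.castSucc with ha'
  set E := Stmt8Aux.lastCompl n with hE
  rw [frob, Finset.mul_sum]
  refine (Finset.sum_bij (fun (τ : Equiv.Perm (Fin n)) _ => τ.extendDomain E)
    (fun τ _ => Finset.mem_filter.mpr ⟨Finset.mem_univ _, Stmt8Aux.ext_last τ⟩)
    (fun τ₁ _ τ₂ _ h => Equiv.Perm.extendDomainHom_injective E h)
    ?_ ?_).symm
  · -- surjectivity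
    intro σ hσ
    have hlast := (Finset.mem_filter.mp hσ).2
    have hp : ∀ x : Fin (n + 1), x ≠ Fin.last n ↔ σ x ≠ Fin.last n := by
      intro x
      constructor
      · intro hx h; exact hx (σ.injective (h.trans hlast.symm))
      · intro hx h; exact hx (by rw [h, hlast])
    refine ⟨E.permCongr.symm (σ.subtypePerm (fun x => (hp x).symm)), Finset.mem_univ _, ?_⟩
    ext x
    refine Fin.lastCases ?_ (fun i => ?_) x
    · rw [Stmt8Aux.ext_last, hlast]
    · rw [Stmt8Aux.ext_castSucc]
      rw [Equiv.permCongr_symm, Equiv.permCongr_apply, Equiv.symm_symm,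
        Stmt8Aux.castSucc_lastCompl_symm, Equiv.Perm.subtypePerm_apply]
      rfl
  · -- pointwise values
    intro τ _
    have hsplit := Fin.prod_univ_castSucc
      (fun x : Fin (n + 1) =>
        if ∀ j : ℕ, (Fintype.equivFin (Fin (n + 1))) x ≤
            (Fintype.equivFin (Fin (n + 1))) (((τ.extendDomain E) ^ j) x)
        then f (cycleProdAt a (τ.extendDomain E) x) else 1)
    rw [hsplit]
    have hlastfac :
        (if ∀ j : ℕ, (Fintype.equivFin (Fin (n + 1))) (Fin.last n) ≤
            (Fintype.equivFin (Fin (n + 1))) (((τ.extendDomain E) ^ j) (Fin.last n))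
         then f (cycleProdAt a (τ.extendDomain E) (Fin.last n)) else 1)
          = f (a (Fin.last n)) := by
      rw [if_pos (fun j => by rw [Stmt8Aux.ext_pow_last]),
        Stmt8Aux.ext_cycleProdAt_last]
    rw [hlastfac]
    have hcastfac :
        (∏ i : Fin n,
          if ∀ j : ℕ, (Fintype.equivFin (Fin (n + 1))) i.castSucc ≤
              (Fintype.equivFin (Fin (n + 1))) (((τ.extendDomain E) ^ j) i.castSucc)
          then f (cycleProdAt a (τ.extendDomain E) i.castSucc) else 1)
          = ∏ i : Fin n,
            if ∀ j : ℕ, (Fintype.equivFin (Fin n)) i ≤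
                (Fintype.equivFin (Fin n)) ((τ ^ j) i)
            then f (cycleProdAt a' τ i) else 1 := by
      have step1 : ∀ i : Fin n,
          (if ∀ j : ℕ, (Fintype.equivFin (Fin (n + 1))) i.castSucc ≤
              (Fintype.equivFin (Fin (n + 1))) (((τ.extendDomain E) ^ j) i.castSucc)
           then f (cycleProdAt a (τ.extendDomain E) i.castSucc) else 1)
            = (if ∀ j : ℕ,
                (fun k : Fin n => (Fintype.equivFin (Fin (n + 1))) k.castSucc) i ≤
                (fun k : Fin n => (Fintype.equivFin (Fin (n + 1))) k.castSucc) ((τ ^ j) i)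
               then f (cycleProdAt a' τ i) else 1) := by
        intro i
        rw [Stmt8Aux.ext_cycleProdAt]
        refine if_congr ?_ rfl rfl
        constructor
        · intro h j; have := h j; rwa [Stmt8Aux.ext_pow_castSucc] at this
        · intro h j; rw [Stmt8Aux.ext_pow_castSucc]; exact h j
      rw [Finset.prod_congr rfl (fun i _ => step1 i)]
      exact Stmt8Aux.prod_ite_selector_indep
        (fun k : Fin n => (Fintype.equivFin (Fin (n + 1))) k.castSucc)
        (fun x y h => Fin.castSucc_injective n ((Fintype.equivFin (Fin (n + 1))).injective h))
        (⇑(Fintype.equivFin (Fin n))) (Fintype.equivFin (Fin n)).injective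
        τ (fun i => f (cycleProdAt a' τ i))
        (fun x y h => (Stmt8Aux.f_cycleProdAt_sameCycle f hf a' τ h).symm)
    rw [hcastfac, Equiv.Perm.sign_extendDomain]
    rw [mul_smul_comm, mul_comm]
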